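/- Let f : ℝ → ℝ be continuous with |f| ≤ M, let N ≥ 1, R > 0, γ = ψ(MR) where ψ(t)=t/√(1+t²), and let φ̃ be the truncated extension of φ(s)=s/√(1−s²) at level γ. Suppose u, v : [0,R] → ℝ solve u' = φ̃⁻¹(v/r^{N−1}), v' = −r^{N−1} f(u) on (0,R) with v(0) = 0 and u ∈ C¹([0,R]). Then |u'(r)| ≤ γ for every r ∈ [0,R], and consequently φ̃(u'(r)) = φ(u'(r)) for all r. -/

import Mathlib

theorem stmt14 (N : ℕ) (hN : 1 ≤ N) (M R : ℝ) (hM : 0 < M) (hR : 0 < R)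
    (f : ℝ → ℝ) (hf : Continuous f) (hfM : ∀ s : ℝ, |f s| ≤ M)
    (γ : ℝ) (hγ : γ = M * R / Real.sqrt (1 + (M * R)^2))
    (φt ψt : ℝ → ℝ)
    (h1 : ∀ s : ℝ, |s| ≤ γ → φt s = s / Real.sqrt (1 - s^2))
    (h2 : ∀ s : ℝ, γ < s →
      φt s = (1 - γ^2)^(-(3:ℝ)/2) * (s - γ) + γ / Real.sqrt (1 - γ^2))
    (h3 : ∀ s : ℝ, s < -γ →
      φt s = (1 - γ^2)^(-(3:ℝ)/2) * (s + γ) - γ / Real.sqrt (1 - γ^2))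
    (hinv₁ : Function.LeftInverse ψt φt) (hinv₂ : Function.RightInverse ψt φt)
    (u v u' : ℝ → ℝ)
    (huc : ContinuousOn u (Set.Icc 0 R)) (hu'c : ContinuousOn u' (Set.Icc 0 R))
    (hvc : ContinuousOn v (Set.Icc 0 R))
    (hud : ∀ r ∈ Set.Ioo (0:ℝ) R, HasDerivAt u (u' r) r)
    (hu' : ∀ r ∈ Set.Ioo (0:ℝ) R, u' r = ψt (v r / r^(N-1)))
    (hvd : ∀ r ∈ Set.Ioo (0:ℝ) R, HasDerivAt v (-(r^(N-1) * f (u r))) r)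
    (hv0 : v 0 = 0) :
    ∀ r ∈ Set.Icc (0:ℝ) R,
      |u' r| ≤ γ ∧ φt (u' r) = u' r / Real.sqrt (1 - (u' r)^2) := by
  set a := M * R with ha
  have ha0 : 0 < a := mul_pos hM hR
  have hden0 : (0:ℝ) < 1 + a ^ 2 := by positivity
  have hsq : (0:ℝ) < Real.sqrt (1 + a ^ 2) := Real.sqrt_pos.mpr hden0
  have hγ0 : 0 ≤ γ := by rw [hγ]; positivity
  have hγsq : γ ^ 2 = a ^ 2 / (1 + a ^ 2) := by
    rw [hγ, div_pow, Real.sq_sqrt hden0.le]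
  have h1γ : 1 - γ ^ 2 = (1 + a ^ 2)⁻¹ := by
    rw [hγsq]; field_simp; ring
  have h1γpos : (0:ℝ) < 1 - γ ^ 2 := by rw [h1γ]; positivity
  have hkey : γ / Real.sqrt (1 - γ ^ 2) = a := by
    rw [h1γ, Real.sqrt_inv, hγ]
    field_simp
  have hslope : (0:ℝ) < (1 - γ ^ 2) ^ (-(3:ℝ)/2) := Real.rpow_pos_of_pos h1γpos _
  -- ψt maps [-a, a] into [-γ, γ]
  have hψ : ∀ w : ℝ, |w| ≤ a → |ψt w| ≤ γ := by
    intro w hw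
    by_contra hcon
    push_neg at hcon
    have hφ : φt (ψt w) = w := hinv₂ w
    rcases lt_abs.mp hcon with h | h
    · have := h2 (ψt w) h
      rw [hφ, hkey] at this
      have hpos : 0 < (1 - γ ^ 2) ^ (-(3:ℝ)/2) * (ψt w - γ) :=
        mul_pos hslope (sub_pos.mpr h)
      have : a < w := by linarith
      have := le_abs_self w
      linarith
    · have hlt : ψt w < -γ := by linarith
      have := h3 (ψt w) hlt
      rw [hφ, hkey] at this
      have hneg : (1 - γ ^ 2) ^ (-(3:ℝ)/2) * (ψt w + γ) < 0 :=
        mul_neg_of_pos_of_neg hslope (by linarith)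
      have : w < -a := by linarith
      have := neg_abs_le w
      linarith
  -- the bound on the open interval
  have hbound : ∀ r ∈ Set.Ioo (0:ℝ) R, |u' r| ≤ γ := by
    rintro r ⟨hr0, hrR⟩
    have hrpow : (0:ℝ) < r ^ (N - 1) := pow_pos hr0 _
    obtain ⟨c, hc_mem, hc⟩ :=
      exists_hasDerivAt_eq_slope v (fun s => -(s ^ (N - 1) * f (u s))) hr0
        (hvc.mono (Set.Icc_subset_Icc le_rfl hrR.le))
        (fun x hx => hvd x ⟨hx.1, hx.2.trans hrR⟩)
    obtain ⟨hc0, hcr⟩ := hc_mem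
    rw [hv0, sub_zero, sub_zero] at hc
    have hvr : v r = -(c ^ (N - 1) * f (u c)) * r :=
      ((div_eq_iff hr0.ne').mp hc.symm)
    have hb1 : |v r| ≤ M * r ^ (N - 1) * r := by
      rw [hvr, abs_mul, abs_neg, abs_mul, abs_of_pos hr0,
        abs_of_pos (pow_pos hc0 (N - 1))]
      have h₁ : c ^ (N - 1) ≤ r ^ (N - 1) := pow_le_pow_left₀ hc0.le hcr.le _
      have h₂ : |f (u c)| ≤ M := hfM _
      calc c ^ (N - 1) * |f (u c)| * r ≤ r ^ (N - 1) * M * r := by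
            gcongr <;> first | exact hc0.le | exact abs_nonneg _ | exact h₂ | exact hcr.le
        _ = M * r ^ (N - 1) * r := by ring
    have hb2 : |v r / r ^ (N - 1)| ≤ a := by
      rw [abs_div, abs_of_pos hrpow, div_le_iff₀ hrpow]
      have hMr : M * r ≤ a := by nlinarith
      nlinarith [pow_pos hr0 (N - 1)]
    rw [hu' r ⟨hr0, hrR⟩]
    exact hψ _ hb2
  -- extend to the closed interval by continuity
  intro r hr
  have hcl : closure (Set.Ioo (0:ℝ) R) = Set.Icc 0 R := closure_Ioo hR.ne
  have hrcl : r ∈ closure (Set.Ioo (0:ℝ) R) := hcl ▸ hr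
  have hne : (nhdsWithin r (Set.Ioo (0:ℝ) R)).NeBot :=
    mem_closure_iff_nhdsWithin_neBot.mp hrcl
  have habs : Filter.Tendsto (fun x => |u' x|)
      (nhdsWithin r (Set.Ioo (0:ℝ) R)) (nhds |u' r|) :=
    ((hu'c r hr).mono Set.Ioo_subset_Icc_self).abs
  have hle : |u' r| ≤ γ :=
    le_of_tendsto habs (Filter.eventually_of_mem self_mem_nhdsWithin hbound)
  exact ⟨hle, h1 _ hle⟩
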